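/- arXiv:2210.09769 — 5 statements merged into one kernel-verified Lean document; each statement's English description precedes it below -/
import Mathlib

section
/- Let A, B be invertible square matrices and b a vector, and suppose F = (A−B)A^{-1} satisfies ‖F‖₂ < 1. Then ‖A^{-1}b − B^{-1}b‖₂ / ‖A^{-1}b‖₂ ≤ (σ_max(A)/σ_min(A)) · ‖F‖₂/(1 − ‖F‖₂). -/
/-- Sensitivity of linear systems: if `F = (A - B)A⁻¹` has operator norm `< 1`, then
`‖A⁻¹b - B⁻¹b‖ / ‖A⁻¹b‖ ≤ (σ_max(A)/σ_min(A)) · ‖F‖/(1-‖F‖)`. -/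
theorem stmt_4 {n : ℕ}
    (A B A' B' : EuclideanSpace ℝ (Fin n) →L[ℝ] EuclideanSpace ℝ (Fin n))
    (hA'l : ∀ v, A' (A v) = v) (hA'r : ∀ v, A (A' v) = v)
    (hB'l : ∀ v, B' (B v) = v) (hB'r : ∀ v, B (B' v) = v)
    (σmin σmax : ℝ) (hσ : 0 < σmin)
    -- σmin and σmax are the smallest and largest singular values of A:
    (hmin : ∀ v, σmin * ‖v‖ ≤ ‖A v‖) (hmax : ∀ v, ‖A v‖ ≤ σmax * ‖v‖)
    (hmin' : ∃ v ≠ 0, ‖A v‖ = σmin * ‖v‖) (hmax' : ∃ v ≠ 0, ‖A v‖ = σmax * ‖v‖)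
    (b : EuclideanSpace ℝ (Fin n)) (hb : A' b ≠ 0)
    (hF : ‖(A - B).comp A'‖ < 1) :
    ‖A' b - B' b‖ / ‖A' b‖ ≤
      (σmax / σmin) * (‖(A - B).comp A'‖ / (1 - ‖(A - B).comp A'‖)) := by
  set F := (A - B).comp A' with hFdef
  set x := A' b with hxdef
  set y := B' b with hydef
  have hf0 : (0:ℝ) ≤ ‖F‖ := norm_nonneg _
  have h1f : 0 < 1 - ‖F‖ := by linarith
  have hx : A x = b := hA'r b
  have hkey : A y - A x = F (A y) := by
    simp [hFdef, ContinuousLinearMap.comp_apply, ContinuousLinearMap.sub_apply,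
      hA'l, hB'r, hx, hydef]
  have h2 : ‖A y - A x‖ ≤ ‖F‖ * ‖A y‖ := hkey ▸ F.le_opNorm _
  have hAy : ‖A y‖ ≤ ‖A x‖ + ‖F‖ * ‖A y‖ := by
    have h := norm_add_le (A x) (A y - A x)
    simp only [add_sub_cancel] at h
    linarith
  have h3 : σmin * ‖x - y‖ ≤ ‖A x - A y‖ := by
    have := hmin (x - y); simpa [map_sub] using this
  have h4 : ‖A x - A y‖ = ‖A y - A x‖ := norm_sub_rev _ _
  have h5 : ‖A x‖ ≤ σmax * ‖x‖ := hmax x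
  have hxpos : 0 < ‖x‖ := norm_pos_iff.mpr hb
  have key : ‖x - y‖ * (σmin * (1 - ‖F‖)) ≤ σmax * ‖F‖ * ‖x‖ := by
    nlinarith [mul_le_mul_of_nonneg_left hAy hf0,
      mul_le_mul_of_nonneg_left h5 hf0, norm_nonneg (A y)]
  rw [div_le_iff₀ hxpos, div_mul_div_comm, div_mul_eq_mul_div,
    le_div_iff₀ (by positivity)]
  linarith
end

section
/- Let γ : ℝ → ℝ^n be a C¹ curve with ‖γ'(t)‖₂ = 1 for all t, and suppose the velocity field satisfies ‖γ'(t₁) − γ'(t₂)‖₂ ≤ M‖γ(t₁) − γ(t₂)‖₂ for all t₁, t₂. Then for every t₀ there exists t ∈ (0, 1/M] such that ‖γ(t₀ + t) − γ(t₀)‖₂ ≥ 1/(4M). -/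
/-- A unit-speed trajectory whose velocity field is `M`-Lipschitz along the curve
escapes the ball of radius `1/(4M)` within time `1/M`. -/
theorem stmt_5 {n : ℕ} (M : ℝ) (hM : 0 < M)
    (γ d : ℝ → EuclideanSpace ℝ (Fin n))
    (hderiv : ∀ t, HasDerivAt γ (d t) t)
    (hunit : ∀ t, ‖d t‖ = 1)
    (hlip : ∀ t₁ t₂, ‖d t₁ - d t₂‖ ≤ M * ‖γ t₁ - γ t₂‖)
    (t₀ : ℝ) :
    ∃ t ∈ Set.Ioc (0:ℝ) (1 / M), 1 / (4 * M) ≤ ‖γ (t₀ + t) - γ t₀‖ := by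
  by_contra hcon
  push_neg at hcon
  set T : ℝ := 1 / M with hT
  have hTpos : 0 < T := by positivity
  -- curve stays in the small ball
  have hball : ∀ t ∈ Set.Icc (0:ℝ) T, ‖γ (t₀ + t) - γ t₀‖ ≤ 1 / (4 * M) := by
    intro t ht
    rcases eq_or_lt_of_le ht.1 with h0 | h0
    · simp [← h0]
      positivity
    · exact (hcon t ⟨h0, ht.2⟩).le
  -- inner product of velocities is large
  have hinner : ∀ t ∈ Set.Icc (0:ℝ) T,
      (3:ℝ)/4 ≤ inner ℝ (d t₀) (d (t₀ + t)) := by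
    intro t ht
    have h1 : ‖d (t₀ + t) - d t₀‖ ≤ M * ‖γ (t₀ + t) - γ t₀‖ := hlip _ _
    have h2 : M * ‖γ (t₀ + t) - γ t₀‖ ≤ M * (1 / (4 * M)) :=
      mul_le_mul_of_nonneg_left (hball t ht) hM.le
    have h3 : M * (1 / (4 * M)) = 1 / 4 := by field_simp
    have h4 : ‖d (t₀ + t) - d t₀‖ ≤ 1 / 4 := by linarith
    have hsq : ‖d (t₀ + t) - d t₀‖ ^ 2
        = ‖d (t₀ + t)‖ ^ 2 - 2 * inner ℝ (d (t₀ + t)) (d t₀) + ‖d t₀‖ ^ 2 := by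
      rw [← norm_sub_sq_real]
    rw [hunit, hunit] at hsq
    have hsym : (inner ℝ (d (t₀ + t)) (d t₀) : ℝ) = inner ℝ (d t₀) (d (t₀ + t)) :=
      real_inner_comm _ _
    have hn : (0:ℝ) ≤ ‖d (t₀ + t) - d t₀‖ := norm_nonneg _
    nlinarith [sq_nonneg (‖d (t₀ + t) - d t₀‖)]
  -- the function f t = ⟪d t₀, γ (t₀ + t)⟫
  set f : ℝ → ℝ := fun t => inner ℝ (d t₀) (γ (t₀ + t)) with hf
  have hfd : ∀ t : ℝ, HasDerivAt f (inner ℝ (d t₀) (d (t₀ + t))) t := by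
    intro t
    have hγ : HasDerivAt (fun s => γ (t₀ + s)) (d (t₀ + t)) t := by
      have := (hderiv (t₀ + t)).scomp t ((hasDerivAt_id t).const_add t₀)
      rwa [one_smul] at this
    have := (hasDerivAt_const t (d t₀)).inner ℝ hγ
    simpa using this
  have hmvt : (3:ℝ)/4 * (T - 0) ≤ f T - f 0 := by
    apply (convex_Icc (0:ℝ) T).mul_sub_le_image_sub_of_le_deriv
      (fun x _ => (hfd x).continuousAt.continuousWithinAt)
      (fun x _ => ((hfd x).differentiableAt).differentiableWithinAt)
      (fun x hx => ?_) 0 (Set.left_mem_Icc.2 hTpos.le) T (Set.right_mem_Icc.2 hTpos.le) hTpos.le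
    rw [(hfd x).deriv]
    exact hinner x (interior_subset hx)
  have hfval : f T - f 0 = inner ℝ (d t₀) (γ (t₀ + T) - γ t₀) := by
    simp [hf, inner_sub_right]
  have hle : (inner ℝ (d t₀) (γ (t₀ + T) - γ t₀) : ℝ) ≤ ‖γ (t₀ + T) - γ t₀‖ := by
    calc (inner ℝ (d t₀) (γ (t₀ + T) - γ t₀) : ℝ) ≤ ‖d t₀‖ * ‖γ (t₀ + T) - γ t₀‖ :=
          real_inner_le_norm _ _
      _ = ‖γ (t₀ + T) - γ t₀‖ := by rw [hunit]; ring
  have hsmall : ‖γ (t₀ + T) - γ t₀‖ ≤ 1 / (4 * M) :=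
    hball T (Set.right_mem_Icc.2 hTpos.le)
  have : (3:ℝ)/4 * T ≤ 1 / (4 * M) := by
    rw [hfval] at hmvt; linarith
  rw [hT] at this
  have h34 : (3:ℝ) / 4 * (1 / M) = 3 / (4 * M) := by field_simp
  rw [h34] at this
  have : (3:ℝ) / (4 * M) ≤ 1 / (4 * M) := this
  have h4M : (0:ℝ) < 4 * M := by linarith
  rw [div_le_div_iff₀ h4M h4M] at this
  nlinarith
end

section
/- Let D : ℝ^n → ℝ^n be an M-Lipschitz unit-vector field and γ its flow. If on the interval [0, 1/M] one has ‖γ(t₁) − γ(t₂)‖₂ ≤ 1/(2M) for all t₁,t₂ ∈ [0,1/M], then ‖γ(1/M) − γ(0)‖₂ ≥ 1/(√2 · M). -/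
/-- If the flow of an `M`-Lipschitz unit vector field stays within `1/(2M)` of itself
on `[0, 1/M]`, then `‖γ(1/M) - γ(0)‖ ≥ 1/(√2·M)`. -/
theorem stmt_6 {n : ℕ} (M : ℝ) (hM : 0 < M)
    (D : EuclideanSpace ℝ (Fin n) → EuclideanSpace ℝ (Fin n))
    (hunit : ∀ x, ‖D x‖ = 1)
    (hlip : ∀ x y, ‖D x - D y‖ ≤ M * ‖x - y‖)
    (γ : ℝ → EuclideanSpace ℝ (Fin n))
    (hflow : ∀ t, HasDerivAt γ (D (γ t)) t)
    (hball : ∀ t₁ ∈ Set.Icc (0:ℝ) (1 / M), ∀ t₂ ∈ Set.Icc (0:ℝ) (1 / M),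
      ‖γ t₁ - γ t₂‖ ≤ 1 / (2 * M)) :
    1 / (Real.sqrt 2 * M) ≤ ‖γ (1 / M) - γ 0‖ := by
  set T : ℝ := 1 / M with hTdef
  have hT : 0 < T := by positivity
  set v := D (γ 0) with hv
  have hcontγ : Continuous γ := continuous_iff_continuousAt.2 fun t => (hflow t).continuousAt
  have hcontD : Continuous D := by
    have : LipschitzWith M.toNNReal D := by
      apply LipschitzWith.of_dist_le_mul
      intro x y
      rw [dist_eq_norm, dist_eq_norm, Real.coe_toNNReal _ hM.le]
      exact hlip x y
    exact this.continuous
  -- pointwise lower bound on the inner product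
  have key : ∀ t ∈ Set.Icc (0:ℝ) T, (7/8 : ℝ) ≤ inner ℝ v (D (γ t)) := by
    intro t ht
    have hmem0 : (0:ℝ) ∈ Set.Icc (0:ℝ) T := ⟨le_rfl, hT.le⟩
    have h1 : ‖D (γ t) - v‖ ≤ 1/2 := by
      calc ‖D (γ t) - v‖ ≤ M * ‖γ t - γ 0‖ := hlip _ _
        _ ≤ M * (1 / (2 * M)) := by
            exact mul_le_mul_of_nonneg_left (hball t ht 0 hmem0) hM.le
        _ = 1/2 := by field_simp
    have h2 : ‖D (γ t) - v‖ ^ 2 = ‖D (γ t)‖^2 - 2 * inner ℝ (D (γ t)) v + ‖v‖^2 := by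
      rw [@norm_sub_sq_real]
    have h3 : ‖D (γ t)‖ = 1 := hunit _
    have h4 : ‖v‖ = 1 := hunit _
    have h5 : ‖D (γ t) - v‖ ^ 2 ≤ (1/2)^2 := by
      apply sq_le_sq' _ h1
      nlinarith [norm_nonneg (D (γ t) - v)]
    rw [real_inner_comm]
    nlinarith [h2, h5]
  -- the derivative of t ↦ ⟪v, γ t⟫
  have hderiv : ∀ t : ℝ, HasDerivAt (fun s => (inner ℝ v (γ s) : ℝ)) (inner ℝ v (D (γ t))) t := by
    intro t
    exact (innerSL ℝ v).hasFDerivAt.comp_hasDerivAt t (hflow t)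
  have hcontInt : Continuous fun s => (inner ℝ v (D (γ s)) : ℝ) :=
    (continuous_const.inner (hcontD.comp hcontγ))
  have hint : ∫ s in (0:ℝ)..T, (inner ℝ v (D (γ s)) : ℝ) = inner ℝ v (γ T) - inner ℝ v (γ 0) := by
    exact intervalIntegral.integral_eq_sub_of_hasDerivAt
      (f := fun s => (inner ℝ v (γ s) : ℝ)) (fun t _ => hderiv t)
      (hcontInt.intervalIntegrable _ _)
  have hlow : (7/8 : ℝ) * T ≤ ∫ s in (0:ℝ)..T, (inner ℝ v (D (γ s)) : ℝ) := by
    have := intervalIntegral.integral_mono_on (μ := MeasureTheory.volume) (a := 0) (b := T) hT.le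
      (intervalIntegrable_const (c := (7/8 : ℝ)))
      (hcontInt.intervalIntegrable _ _) key
    simpa [mul_comm, mul_div_assoc] using this
  have hCS : (inner ℝ v (γ T) - inner ℝ v (γ 0) : ℝ) ≤ ‖γ T - γ 0‖ := by
    have : (inner ℝ v (γ T - γ 0) : ℝ) ≤ ‖v‖ * ‖γ T - γ 0‖ := real_inner_le_norm _ _
    rw [inner_sub_right] at this
    rw [show ‖v‖ = 1 from hunit _, one_mul] at this; linarith
  have h78 : (7/8 : ℝ) * T ≤ ‖γ T - γ 0‖ := by
    rw [hint] at hlow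
    linarith
  have hsqrt : Real.sqrt 2 ≥ 8/7 := by
    nlinarith [Real.sq_sqrt (by norm_num : (2:ℝ) ≥ 0), Real.sqrt_nonneg 2]
  have hs0 : (0:ℝ) < Real.sqrt 2 := by positivity
  have : 1 / (Real.sqrt 2 * M) ≤ (7/8) * T := by
    rw [hTdef, div_le_iff₀ (by positivity)]
    have heq : (7:ℝ)/8 * (1/M) * (Real.sqrt 2 * M) = 7/8 * Real.sqrt 2 := by
      field_simp
    rw [heq]
    nlinarith
  linarith
end

section
/- Let γ : ℝ → ℝ^n be the flow of an M-Lipschitz unit vector field D, let 0 < δ ≤ 1/4, and let p ∈ ℝ^n with ‖γ(t₀) − p‖₂ ≤ δ/(2M). Then there exists t* ∈ [−1/M, 1/M] such that ‖γ(t₀ + t*) − γ(t₀)‖₂ ≤ δ/M and D(γ(t₀ + t*))ᵀ(γ(t₀ + t*) − p) = 0. -/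
open scoped RealInnerProductSpace

/-- Near any point `p` close to the trajectory, there is a nearby time at which the
displacement to `p` is orthogonal to the direction of motion. -/
theorem stmt_8 {n : ℕ} (M : ℝ) (hM : 0 < M)
    (D : EuclideanSpace ℝ (Fin n) → EuclideanSpace ℝ (Fin n))
    (hunit : ∀ x, ‖D x‖ = 1)
    (hlip : ∀ x y, ‖D x - D y‖ ≤ M * ‖x - y‖)
    (γ : ℝ → EuclideanSpace ℝ (Fin n))
    (hflow : ∀ t, HasDerivAt γ (D (γ t)) t)
    (δ : ℝ) (hδ0 : 0 < δ) (hδ : δ ≤ 1 / 4)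
    (t₀ : ℝ) (p : EuclideanSpace ℝ (Fin n))
    (hp : ‖γ t₀ - p‖ ≤ δ / (2 * M)) :
    ∃ tstar ∈ Set.Icc (-(1 / M)) (1 / M),
      ‖γ (t₀ + tstar) - γ t₀‖ ≤ δ / M ∧
      ⟪D (γ (t₀ + tstar)), γ (t₀ + tstar) - p⟫ = 0 := by
  -- D is continuous
  have hDlip : LipschitzWith (Real.toNNReal M) D := by
    apply LipschitzWith.of_dist_le_mul
    intro x y
    simpa [dist_eq_norm, Real.coe_toNNReal M hM.le] using hlip x y
  have hDcont : Continuous D := hDlip.continuous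
  have hγcont : Continuous γ := by
    rw [continuous_iff_continuousAt]
    exact fun t => (hflow t).continuousAt
  -- γ is 1-Lipschitz
  have hγlip : ∀ a b : ℝ, ‖γ b - γ a‖ ≤ |b - a| := by
    intro a b
    have := Convex.norm_image_sub_le_of_norm_hasDerivWithin_le
      (f := γ) (f' := fun s => D (γ s)) (C := 1) (s := Set.univ)
      (fun x _ => (hflow x).hasDerivWithinAt)
      (fun x _ => le_of_eq (hunit _)) convex_univ (Set.mem_univ a) (Set.mem_univ b)
    simpa [Real.norm_eq_abs] using this
  -- key approximation estimate
  have key : ∀ t : ℝ, ‖γ (t₀ + t) - γ t₀ - t • D (γ (t₀ + t))‖ ≤ M * t ^ 2 := by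
    intro t
    set v := D (γ (t₀ + t)) with hv
    have hderiv : ∀ s : ℝ, HasDerivAt (fun s => γ s - (s - t₀) • v)
        (D (γ s) - v) s := by
      intro s
      have h1 : HasDerivAt (fun s : ℝ => (s - t₀) • v) v s := by
        simpa using ((hasDerivAt_id s).sub_const t₀).smul_const v
      exact (hflow s).sub h1
    have hb : ∀ s ∈ Set.uIcc t₀ (t₀ + t), ‖D (γ s) - v‖ ≤ M * |t| := by
      intro s hs
      have h1 : ‖D (γ s) - v‖ ≤ M * ‖γ s - γ (t₀ + t)‖ := hlip _ _
      have h2 : ‖γ s - γ (t₀ + t)‖ ≤ |s - (t₀ + t)| := by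
        simpa using hγlip (t₀ + t) s
      have h3 : |s - (t₀ + t)| ≤ |t| := by
        rw [Set.mem_uIcc] at hs
        rcases hs with ⟨h4, h5⟩ | ⟨h4, h5⟩ <;>
          · rw [abs_le]
            constructor <;> cases abs_cases t <;> linarith
      nlinarith [norm_nonneg (γ s - γ (t₀ + t))]
    have := Convex.norm_image_sub_le_of_norm_hasDerivWithin_le
      (f := fun s => γ s - (s - t₀) • v) (f' := fun s => D (γ s) - v)
      (C := M * |t|) (s := Set.uIcc t₀ (t₀ + t))
      (fun x _ => (hderiv x).hasDerivWithinAt) hb (convex_uIcc _ _)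
      (Set.left_mem_uIcc) (Set.right_mem_uIcc)
    have habs : M * |t| * ‖(t₀ + t) - t₀‖ = M * t ^ 2 := by
      rw [Real.norm_eq_abs]
      rw [show t₀ + t - t₀ = t by ring]
      rw [show M * |t| * |t| = M * (|t| * |t|) by ring, abs_mul_abs_self]
      ring
    calc ‖γ (t₀ + t) - γ t₀ - t • v‖
        = ‖(γ (t₀ + t) - (t₀ + t - t₀) • v) - (γ t₀ - (t₀ - t₀) • v)‖ := by
          congr 1
          simp
          abel_nf
      _ ≤ M * |t| * ‖(t₀ + t) - t₀‖ := this
      _ = M * t ^ 2 := habs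
  -- the function g
  set g : ℝ → ℝ := fun t => ⟪D (γ (t₀ + t)), γ (t₀ + t) - p⟫ with hg
  have hgcont : Continuous g := by
    apply Continuous.inner
    · exact hDcont.comp (hγcont.comp (continuous_const.add continuous_id))
    · exact (hγcont.comp (continuous_const.add continuous_id)).sub continuous_const
  -- bounds on g
  have gbound : ∀ t : ℝ, |g t - t| ≤ M * t ^ 2 + δ / (2 * M) := by
    intro t
    set v := D (γ (t₀ + t)) with hv
    have hvv : ⟪v, v⟫ = 1 := by
      rw [real_inner_self_eq_norm_sq, hunit]; norm_num
    have hdecomp : g t - t = ⟪v, γ (t₀ + t) - γ t₀ - t • v⟫ + ⟪v, γ t₀ - p⟫ := by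
      rw [hg]
      simp only [inner_sub_right, inner_smul_right, hvv]
      ring
    rw [hdecomp]
    have h1 : |⟪v, γ (t₀ + t) - γ t₀ - t • v⟫| ≤ M * t ^ 2 := by
      calc |⟪v, γ (t₀ + t) - γ t₀ - t • v⟫| ≤ ‖v‖ * ‖γ (t₀ + t) - γ t₀ - t • v‖ :=
            abs_real_inner_le_norm _ _
        _ ≤ M * t ^ 2 := by rw [hunit]; simpa using key t
    have h2 : |⟪v, γ t₀ - p⟫| ≤ δ / (2 * M) := by
      calc |⟪v, γ t₀ - p⟫| ≤ ‖v‖ * ‖γ t₀ - p‖ := abs_real_inner_le_norm _ _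
        _ ≤ δ / (2 * M) := by rw [hunit]; simpa using hp
    calc |⟪v, γ (t₀ + t) - γ t₀ - t • v⟫ + ⟪v, γ t₀ - p⟫|
        ≤ |⟪v, γ (t₀ + t) - γ t₀ - t • v⟫| + |⟪v, γ t₀ - p⟫| := abs_add_le _ _
      _ ≤ M * t ^ 2 + δ / (2 * M) := add_le_add h1 h2
  set a := δ / M with ha
  have ha0 : 0 < a := div_pos hδ0 hM
  have hMa : M * a ^ 2 = δ ^ 2 / M := by field_simp [ha]; rw [ha]; field_simp
  have h1 : M * a ^ 2 + δ / (2 * M) < a := by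
    rw [hMa, ha, div_add_div _ _ (ne_of_gt hM) (by positivity : (2:ℝ) * M ≠ 0),
      div_lt_div_iff₀ (by positivity) hM]
    nlinarith [mul_pos (mul_pos hδ0 hM) hM, mul_pos hM hM]
  have hga : 0 < g a := by
    have := gbound a
    rw [abs_le] at this
    linarith [this.1]
  have hgna : g (-a) < 0 := by
    have := gbound (-a)
    rw [abs_le] at this
    have h1' : M * (-a) ^ 2 + δ / (2 * M) < a := by
      rw [show ((-a):ℝ) ^ 2 = a ^ 2 by ring]; exact h1
    linarith [this.2]
  -- IVT
  have hsub : Set.Icc (g (-a)) (g a) ⊆ g '' Set.Icc (-a) a :=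
    intermediate_value_Icc (by linarith) hgcont.continuousOn
  obtain ⟨tstar, hts, hgts⟩ := hsub ⟨hgna.le, hga.le⟩
  refine ⟨tstar, ?_, ?_, hgts⟩
  · have haM : a ≤ 1 / M := by
      rw [ha, div_le_div_iff₀ hM hM]
      nlinarith
    exact ⟨by linarith [hts.1], by linarith [hts.2]⟩
  · have : |tstar| ≤ a := abs_le.mpr ⟨hts.1, hts.2⟩
    calc ‖γ (t₀ + tstar) - γ t₀‖ ≤ |t₀ + tstar - t₀| := hγlip t₀ (t₀ + tstar)
      _ = |tstar| := by rw [show t₀ + tstar - t₀ = tstar by ring]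
      _ ≤ δ / M := this
end

section
/- Let A(x), A(y) be invertible n×n matrices and b(x), b(y) vectors, where all singular values of A(x) are in [σ_min, σ_max], ‖A(x) − A(y)‖₂ ≤ C_A‖x−y‖₂, ‖b(x) − b(y)‖₂ ≤ C_b‖x−y‖₂, and ‖x−y‖₂ ≤ σ_min/(2C_A). Define the normalized solution map Φ(w) = (A^{-1}(w)b(w), 1)/√(1 + ‖A^{-1}(w)b(w)‖₂²). Then ‖Φ(x) − Φ(y)‖₂ ≤ M‖x−y‖₂ for some constant M depending only on σ_min, σ_max, C_A, C_b. -/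
open Real

lemma key_scalar (a b d : ℝ) (ha : 0 ≤ a) (hb : 0 ≤ b) (hd : |b - a| ≤ d) :
    |1 / Real.sqrt (1 + a ^ 2) - 1 / Real.sqrt (1 + b ^ 2)| ≤ d / Real.sqrt (1 + b ^ 2) ∧
    a * |1 / Real.sqrt (1 + a ^ 2) - 1 / Real.sqrt (1 + b ^ 2)| ≤ d / Real.sqrt (1 + b ^ 2) := by
  set α := Real.sqrt (1 + a ^ 2) with hαdef
  set β := Real.sqrt (1 + b ^ 2) with hβdef
  have hαpos : 0 < α := Real.sqrt_pos.mpr (by positivity)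
  have hβpos : 0 < β := Real.sqrt_pos.mpr (by positivity)
  have hα2 : α ^ 2 = 1 + a ^ 2 := Real.sq_sqrt (by positivity)
  have hβ2 : β ^ 2 = 1 + b ^ 2 := Real.sq_sqrt (by positivity)
  have haα : a ≤ α := by nlinarith
  have hbβ : b ≤ β := by nlinarith
  have h1α : 1 ≤ α := by nlinarith
  have h1β : 1 ≤ β := by nlinarith
  have hdiff : 1 / α - 1 / β = (β - α) / (α * β) := by field_simp
  have habs : |1 / α - 1 / β| = |β - α| / (α * β) := by
    rw [hdiff, abs_div, abs_of_pos (mul_pos hαpos hβpos)]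
  have hkey : |β - α| * (α + β) = |b - a| * (a + b) := by
    have h1 : |β - α| * (α + β) = |β ^ 2 - α ^ 2| := by
      rw [← abs_of_pos (show (0:ℝ) < α + β by positivity), ← abs_mul]
      ring_nf
    have h2 : (β : ℝ) ^ 2 - α ^ 2 = (b - a) * (a + b) := by rw [hα2, hβ2]; ring
    rw [h1, h2, abs_mul, abs_of_nonneg (add_nonneg ha hb)]
  have hd0 : 0 ≤ d := le_trans (abs_nonneg _) hd
  have hba : |β - α| * (α + β) ≤ d * (a + b) := by
    rw [hkey]; exact mul_le_mul_of_nonneg_right hd (add_nonneg ha hb)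
  have hE : |β - α| ≤ d := by
    have h3 : d * (a + b) ≤ d * (α + β) :=
      mul_le_mul_of_nonneg_left (add_le_add haα hbβ) hd0
    have := le_trans hba h3
    exact le_of_mul_le_mul_right this (by positivity)
  have hE2 : a * |β - α| ≤ d * α := by
    have h4 : a * (|β - α| * (α + β)) ≤ a * (d * (a + b)) :=
      mul_le_mul_of_nonneg_left hba ha
    have h5 : a * b ≤ α * β := mul_le_mul haα hbβ hb hαpos.le
    have h6 : a * (d * (a + b)) ≤ d * α * (α + β) := by nlinarith
    have h7 : a * |β - α| * (α + β) ≤ d * α * (α + β) := by nlinarith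
    exact le_of_mul_le_mul_right h7 (by positivity)
  constructor
  · rw [habs, div_le_div_iff₀ (by positivity) hβpos]
    nlinarith [mul_le_mul_of_nonneg_right hE hβpos.le, mul_nonneg hd0 hβpos.le]
  · rw [habs, show a * (|β - α| / (α * β)) = a * |β - α| / (α * β) by ring,
      div_le_div_iff₀ (by positivity) hβpos]
    nlinarith [mul_le_mul_of_nonneg_right hE2 hβpos.le]

lemma key_vec {E : Type*} [NormedAddCommGroup E] [NormedSpace ℝ E] (u v : E) :
    ‖(1 / Real.sqrt (1 + ‖u‖ ^ 2)) • u - (1 / Real.sqrt (1 + ‖v‖ ^ 2)) • v‖ +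
      |1 / Real.sqrt (1 + ‖u‖ ^ 2) - 1 / Real.sqrt (1 + ‖v‖ ^ 2)| ≤
    3 * ‖u - v‖ / Real.sqrt (1 + ‖v‖ ^ 2) := by
  set α := Real.sqrt (1 + ‖u‖ ^ 2) with hαdef
  set β := Real.sqrt (1 + ‖v‖ ^ 2) with hβdef
  have hβpos : 0 < β := Real.sqrt_pos.mpr (by positivity)
  have hd : |‖v‖ - ‖u‖| ≤ ‖u - v‖ := by
    rw [show (u - v) = -(v - u) by abel, norm_neg]
    exact abs_norm_sub_norm_le v u
  obtain ⟨h1, h2⟩ := key_scalar ‖u‖ ‖v‖ ‖u - v‖ (norm_nonneg u) (norm_nonneg v) hd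
  have hdec : (1/α) • u - (1/β) • v = (1/β) • (u - v) + (1/α - 1/β) • u := by
    rw [smul_sub, sub_smul]; abel
  have hn : ‖(1/α) • u - (1/β) • v‖ ≤ ‖u - v‖ / β + ‖u‖ * |1/α - 1/β| := by
    rw [hdec]
    refine le_trans (norm_add_le _ _) ?_
    rw [norm_smul, norm_smul, Real.norm_eq_abs, Real.norm_eq_abs,
      abs_of_pos (by positivity : (0:ℝ) < 1/β)]
    rw [one_div, inv_mul_eq_div]
    nlinarith [abs_nonneg (1/α - 1/β), norm_nonneg u, norm_nonneg (u - v)]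
  have : (3:ℝ) * ‖u - v‖ / β = ‖u - v‖ / β + (‖u - v‖ / β + ‖u - v‖ / β) := by ring
  rw [this]
  linarith

set_option maxHeartbeats 1000000 in
/-- Lipschitzness of the normalized solution map
`Φ(w) = (A(w)⁻¹b(w), 1)/√(1+‖A(w)⁻¹b(w)‖²)`. -/
theorem stmt_9 (σmin σmax CA Cb : ℝ)
    (hσ : 0 < σmin) (hσσ : σmin ≤ σmax) (hCA : 0 < CA) (hCb : 0 < Cb) :
    ∃ M : ℝ, 0 < M ∧
      ∀ (n : ℕ)
        (Ax Ay Ax' Ay' : EuclideanSpace ℝ (Fin n) →L[ℝ] EuclideanSpace ℝ (Fin n))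
        (bx by' : EuclideanSpace ℝ (Fin n)) (x y : EuclideanSpace ℝ (Fin n)),
        (∀ v, Ax' (Ax v) = v) → (∀ v, Ax (Ax' v) = v) →
        (∀ v, Ay' (Ay v) = v) → (∀ v, Ay (Ay' v) = v) →
        -- all singular values of A(x) lie in [σmin, σmax]:
        (∀ v, σmin * ‖v‖ ≤ ‖Ax v‖) → (∀ v, ‖Ax v‖ ≤ σmax * ‖v‖) →
        ‖Ax - Ay‖ ≤ CA * ‖x - y‖ →
        ‖bx - by'‖ ≤ Cb * ‖x - y‖ →
        ‖x - y‖ ≤ σmin / (2 * CA) →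
        ‖((1 / Real.sqrt (1 + ‖Ax' bx‖ ^ 2)) •
            (WithLp.equiv 2 (EuclideanSpace ℝ (Fin n) × ℝ)).symm (Ax' bx, 1) :
              WithLp 2 (EuclideanSpace ℝ (Fin n) × ℝ)) -
          (1 / Real.sqrt (1 + ‖Ay' by'‖ ^ 2)) •
            (WithLp.equiv 2 (EuclideanSpace ℝ (Fin n) × ℝ)).symm (Ay' by', 1)‖
          ≤ M * ‖x - y‖ := by
  refine ⟨6 * max CA Cb / σmin, by positivity, ?_⟩
  intro n Ax Ay Ax' Ay' bx by' x y hAx'Ax hAxAx' hAy'Ay hAyAy' hlow hhigh hAlip hblip hxy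
  set u := Ax' bx with hu
  set v := Ay' by' with hv
  set c : ℝ := 1 / Real.sqrt (1 + ‖u‖ ^ 2) with hc
  set c' : ℝ := 1 / Real.sqrt (1 + ‖v‖ ^ 2) with hc'
  -- Step 1: reduce the WithLp norm
  have hD : ((c • (WithLp.equiv 2 (EuclideanSpace ℝ (Fin n) × ℝ)).symm (u, 1) :
        WithLp 2 (EuclideanSpace ℝ (Fin n) × ℝ)) -
      c' • (WithLp.equiv 2 (EuclideanSpace ℝ (Fin n) × ℝ)).symm (v, 1)) =
      (WithLp.equiv 2 (EuclideanSpace ℝ (Fin n) × ℝ)).symm (c • u - c' • v, c - c') := by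
    rw [WithLp.equiv_symm_apply, ← WithLp.toLp_smul, ← WithLp.toLp_smul, ← WithLp.toLp_sub]
    congr 1
    simp [Prod.smul_mk, Prod.mk_sub_mk, smul_eq_mul, mul_one]
  rw [hD, WithLp.prod_norm_eq_of_L2]
  have hfst : ((WithLp.equiv 2 (EuclideanSpace ℝ (Fin n) × ℝ)).symm
      (c • u - c' • v, c - c')).fst = c • u - c' • v := rfl
  have hsnd : ((WithLp.equiv 2 (EuclideanSpace ℝ (Fin n) × ℝ)).symm
      (c • u - c' • v, c - c')).snd = c - c' := rfl
  rw [hfst, hsnd]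
  -- sqrt(A^2+B^2) ≤ A + B
  have hsq : Real.sqrt (‖c • u - c' • v‖ ^ 2 + ‖c - c'‖ ^ 2) ≤
      ‖c • u - c' • v‖ + |c - c'| := by
    rw [Real.norm_eq_abs]
    have h1 : ‖c • u - c' • v‖ ^ 2 + |c - c'| ^ 2 ≤ (‖c • u - c' • v‖ + |c - c'|) ^ 2 := by
      nlinarith [norm_nonneg (c • u - c' • v), abs_nonneg (c - c')]
    calc Real.sqrt (‖c • u - c' • v‖ ^ 2 + |c - c'| ^ 2)
        ≤ Real.sqrt ((‖c • u - c' • v‖ + |c - c'|) ^ 2) := Real.sqrt_le_sqrt h1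
      _ = ‖c • u - c' • v‖ + |c - c'| := Real.sqrt_sq (by positivity)
  refine le_trans hsq ?_
  -- Step 2: projective Lipschitz bound
  have hproj := key_vec u v
  -- Step 3: bound ‖u - v‖
  have hAinv : ∀ z, σmin * ‖Ax' z‖ ≤ ‖z‖ := by
    intro z
    have := hlow (Ax' z)
    rwa [hAxAx' z] at this
  have huv : σmin * ‖u - v‖ ≤ (Cb + CA * ‖v‖) * ‖x - y‖ := by
    have h2 : u - v = Ax' (bx - Ax v) := by
      rw [map_sub, hAx'Ax]
    have h3 : ‖bx - Ax v‖ ≤ Cb * ‖x - y‖ + CA * ‖x - y‖ * ‖v‖ := by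
      have hAyv : Ay v = by' := hAyAy' by'
      have : bx - Ax v = (bx - by') + (Ay v - Ax v) := by rw [hAyv]; abel
      rw [this]
      refine le_trans (norm_add_le _ _) ?_
      have h4 : ‖Ay v - Ax v‖ ≤ CA * ‖x - y‖ * ‖v‖ := by
        have h5 : Ay v - Ax v = -((Ax - Ay) v) := by
          simp [ContinuousLinearMap.sub_apply]
        rw [h5, norm_neg]
        calc ‖(Ax - Ay) v‖ ≤ ‖Ax - Ay‖ * ‖v‖ := (Ax - Ay).le_opNorm v
          _ ≤ CA * ‖x - y‖ * ‖v‖ := by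
            exact mul_le_mul_of_nonneg_right hAlip (norm_nonneg v)
      linarith
    calc σmin * ‖u - v‖ = σmin * ‖Ax' (bx - Ax v)‖ := by rw [h2]
      _ ≤ ‖bx - Ax v‖ := hAinv _
      _ ≤ Cb * ‖x - y‖ + CA * ‖x - y‖ * ‖v‖ := h3
      _ = (Cb + CA * ‖v‖) * ‖x - y‖ := by ring
  -- Step 4: combine
  set β := Real.sqrt (1 + ‖v‖ ^ 2) with hβ
  have hβpos : 0 < β := Real.sqrt_pos.mpr (by positivity)
  have hβ2 : β ^ 2 = 1 + ‖v‖ ^ 2 := Real.sq_sqrt (by positivity)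
  have h1β : 1 ≤ β := by nlinarith
  have hvβ : ‖v‖ ≤ β := by nlinarith [norm_nonneg v]
  refine le_trans hproj ?_
  rw [div_le_iff₀ hβpos]
  -- 3 * ‖u - v‖ ≤ (6 * max CA Cb / σmin) * ‖x - y‖ * β
  have hM : (6 * max CA Cb / σmin) * ‖x - y‖ * β * σmin = 6 * max CA Cb * ‖x - y‖ * β := by
    field_simp
  have hCAm : CA ≤ max CA Cb := le_max_left _ _
  have hCbm : Cb ≤ max CA Cb := le_max_right _ _
  have hxy0 : (0:ℝ) ≤ ‖x - y‖ := norm_nonneg _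
  have hgoal : 3 * ‖u - v‖ * σmin ≤ 6 * max CA Cb * ‖x - y‖ * β := by
    have h6 : (Cb + CA * ‖v‖) * ‖x - y‖ ≤ 2 * max CA Cb * β * ‖x - y‖ := by
      have : Cb + CA * ‖v‖ ≤ 2 * max CA Cb * β := by
        nlinarith [mul_le_mul hCAm hvβ (norm_nonneg v) (le_trans hCA.le hCAm)]
      exact mul_le_mul_of_nonneg_right this hxy0
    nlinarith [huv]
  nlinarith [hgoal, mul_pos hβpos hσ]
end
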